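/- Let C ⊆ ℝ^d be nonempty closed convex, f : ℝ^d → ℝ convex with all subgradients on a set X₀ ⊇ C bounded in norm by M, α > 0, v ∈ ℝ^d, x ∈ C, and z ∈ X₀. If x⁺ := P_C(prox_{αf}(v)), then for all τ, η, μ > 0: ‖x⁺ - x‖² ≤ ‖v - x‖² - 2α(f(z) - f(x)) + (1/τ + 1/η)M²α² + τ‖v - z‖² + (η + μ - 2)‖v - prox_{αf}(v)‖² - (1 - 1/μ)‖x⁺ - v‖². -/

import Mathlib

set_option linter.unusedSectionVars false

open scoped RealInnerProductSpace
open Set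

variable {E : Type*} [NormedAddCommGroup E] [InnerProductSpace ℝ E] [FiniteDimensional ℝ E]

/-- difference quotient -/
noncomputable def dq (f : E → ℝ) (z u : E) (t : ℝ) : ℝ := (f (z + t • u) - f z) / t

/-- directional derivative (inf of difference quotients) -/
noncomputable def ddv (f : E → ℝ) (z : E) (u : E) : ℝ := sInf (dq f z u '' Set.Ioi 0)

section props
variable {f : E → ℝ} {z : E}

lemma ddv_nonempty (f : E → ℝ) (z u : E) : (dq f z u '' Set.Ioi 0).Nonempty :=
  ⟨dq f z u 1, 1, Set.mem_Ioi.mpr one_pos, rfl⟩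

variable (hf : ConvexOn ℝ Set.univ f)
include hf

lemma dq_mono (u : E) {s t : ℝ} (hs : 0 < s) (hst : s ≤ t) : dq f z u s ≤ dq f z u t := by
  have ht : 0 < t := hs.trans_le hst
  have hpt : z + s • u = (1 - s / t) • z + (s / t) • (z + t • u) := by
    rw [smul_add, smul_smul, div_mul_cancel₀ s ht.ne', ← add_assoc, ← add_smul]
    norm_num
  have hcv := hf.2 (mem_univ z) (mem_univ (z + t • u))
    (show (0:ℝ) ≤ 1 - s/t by rw [sub_nonneg]; exact div_le_one_of_le₀ hst ht.le)
    (show (0:ℝ) ≤ s/t by positivity) (show 1 - s/t + s/t = 1 by ring)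
  rw [← hpt] at hcv
  simp only [smul_eq_mul] at hcv
  have heq : (1 - s/t) * f z + s/t * f (z + t • u)
      = ((t - s) * f z + s * f (z + t • u)) / t := by field_simp
  rw [heq, le_div_iff₀ ht] at hcv
  rw [dq, dq, div_le_div_iff₀ hs ht]
  nlinarith [hcv]

lemma dq_lb (u : E) {t : ℝ} (ht : 0 < t) : f z - f (z - u) ≤ dq f z u t := by
  have h1 : 0 < t + 1 := by linarith
  have hpt : (t / (t+1)) • (z - u) + (1 / (t+1)) • (z + t • u) = z := by
    match_scalars <;> field_simp <;> ring
  have hcv := hf.2 (mem_univ (z - u)) (mem_univ (z + t • u))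
    (show (0:ℝ) ≤ t/(t+1) by positivity) (show (0:ℝ) ≤ 1/(t+1) by positivity)
    (show t/(t+1) + 1/(t+1) = 1 by field_simp)
  rw [hpt] at hcv
  simp only [smul_eq_mul] at hcv
  have heq : t/(t+1) * f (z - u) + 1/(t+1) * f (z + t • u)
      = (t * f (z - u) + f (z + t • u)) / (t+1) := by field_simp
  rw [heq, le_div_iff₀ h1] at hcv
  rw [dq, le_div_iff₀ ht]
  nlinarith [hcv]

lemma ddv_bddBelow (u : E) : BddBelow (dq f z u '' Set.Ioi 0) := by
  refine ⟨f z - f (z - u), ?_⟩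
  rintro a ⟨t, ht, rfl⟩
  exact dq_lb hf u ht

lemma ddv_le_dq (u : E) {t : ℝ} (ht : 0 < t) : ddv f z u ≤ dq f z u t :=
  csInf_le (ddv_bddBelow hf u) ⟨t, ht, rfl⟩

lemma ddv_smul_le {c : ℝ} (hc : 0 < c) (u : E) : ddv f z (c • u) ≤ c * ddv f z u := by
  rw [← div_le_iff₀' hc]
  refine le_csInf (ddv_nonempty f z u) ?_
  rintro b ⟨s, hs, rfl⟩
  rw [Set.mem_Ioi] at hs
  rw [div_le_iff₀' hc]
  have key : dq f z (c • u) (s / c) = c * dq f z u s := by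
    rw [dq, dq, smul_smul, div_mul_cancel₀ s hc.ne']
    field_simp
  rw [← key]
  exact ddv_le_dq hf _ (by positivity)

lemma ddv_smul {c : ℝ} (hc : 0 < c) (u : E) : ddv f z (c • u) = c * ddv f z u := by
  refine le_antisymm (ddv_smul_le hf hc u) ?_
  have h := ddv_smul_le (z := z) hf (inv_pos.mpr hc) (c • u)
  rw [smul_smul, inv_mul_cancel₀ hc.ne', one_smul] at h
  calc c * ddv f z u ≤ c * (c⁻¹ * ddv f z (c • u)) :=
        mul_le_mul_of_nonneg_left h hc.le
    _ = ddv f z (c • u) := by field_simp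

lemma ddv_add (u w : E) : ddv f z (u + w) ≤ ddv f z u + ddv f z w := by
  refine le_of_forall_pos_le_add ?_
  intro ε hε
  obtain ⟨a, ⟨t1, ht1, rfl⟩, ha⟩ := exists_lt_of_csInf_lt (ddv_nonempty f z u)
    (show ddv f z u < ddv f z u + ε/2 by linarith)
  obtain ⟨b, ⟨t2, ht2, rfl⟩, hb⟩ := exists_lt_of_csInf_lt (ddv_nonempty f z w)
    (show ddv f z w < ddv f z w + ε/2 by linarith)
  rw [Set.mem_Ioi] at ht1 ht2
  set t := min t1 t2 / 2 with htdef
  have ht : 0 < t := by positivity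
  have h2t1 : 2 * t ≤ t1 := by
    have := min_le_left t1 t2; rw [htdef]; linarith
  have h2t2 : 2 * t ≤ t2 := by
    have := min_le_right t1 t2; rw [htdef]; linarith
  have hsplit : dq f z (u + w) t ≤ dq f z u (2*t) + dq f z w (2*t) := by
    have hpt : z + t • (u + w) = (1/2 : ℝ) • (z + (2*t) • u) + (1/2 : ℝ) • (z + (2*t) • w) := by
      match_scalars <;> ring
    have hcv := hf.2 (mem_univ (z + (2*t) • u)) (mem_univ (z + (2*t) • w))
      (show (0:ℝ) ≤ 1/2 by norm_num) (show (0:ℝ) ≤ 1/2 by norm_num)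
      (show (1:ℝ)/2 + 1/2 = 1 by norm_num)
    rw [← hpt] at hcv
    simp only [smul_eq_mul] at hcv
    have heq : dq f z u (2*t) + dq f z w (2*t)
        = (f (z + (2*t) • u) + f (z + (2*t) • w) - 2 * f z) / (2*t) := by
      rw [dq, dq]; ring
    rw [heq, dq, div_le_div_iff₀ ht (by positivity)]
    nlinarith [mul_le_mul_of_nonneg_right hcv (by positivity : (0:ℝ) ≤ 2*t)]
  calc ddv f z (u + w) ≤ dq f z (u + w) t := ddv_le_dq hf _ ht
    _ ≤ dq f z u (2*t) + dq f z w (2*t) := hsplit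
    _ ≤ dq f z u t1 + dq f z w t2 :=
        add_le_add (dq_mono hf u (by positivity) h2t1) (dq_mono hf w (by positivity) h2t2)
    _ ≤ ddv f z u + ε/2 + (ddv f z w + ε/2) := add_le_add ha.le hb.le
    _ = ddv f z u + ddv f z w + ε := by ring

end props

lemma exists_subgradient (f : E → ℝ) (hf : ConvexOn ℝ Set.univ f) (z : E) :
    ∃ g : E, ∀ y, f z + ⟪y - z, g⟫ ≤ f y := by
  have hbot : ∀ x : (⊥ : E →ₗ.[ℝ] ℝ).domain, (⊥ : E →ₗ.[ℝ] ℝ) x ≤ ddv f z x := by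
    rintro ⟨x, hx⟩
    have hx0 : x = 0 := (Submodule.mem_bot ℝ).mp hx
    subst hx0
    have h1 : (⊥ : E →ₗ.[ℝ] ℝ) ⟨0, hx⟩ = 0 := rfl
    rw [h1]
    refine le_csInf (ddv_nonempty f z _) ?_
    rintro b ⟨t, ht, rfl⟩
    rw [Set.mem_Ioi] at ht
    simp [dq]
  obtain ⟨g, -, hg⟩ := exists_extension_of_le_sublinear ⊥ (ddv f z)
    (fun c hc x => ddv_smul hf hc x) (fun x y => ddv_add hf x y) hbot
  refine ⟨(InnerProductSpace.toDual ℝ E).symm (LinearMap.toContinuousLinearMap g), ?_⟩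
  intro y
  have h1 : ⟪y - z, (InnerProductSpace.toDual ℝ E).symm (LinearMap.toContinuousLinearMap g)⟫
      = g (y - z) := by
    rw [real_inner_comm, InnerProductSpace.toDual_symm_apply]
    rfl
  rw [h1]
  have h2 : g (y - z) ≤ ddv f z (y - z) := hg _
  have h3 : ddv f z (y - z) ≤ dq f z (y - z) 1 := ddv_le_dq hf _ one_pos
  have h4 : dq f z (y - z) 1 = f y - f z := by
    rw [dq, one_smul, div_one, add_sub_cancel]
  linarith

section young
lemma young_aux (a b c : ℝ) (hc : 0 < c) : 2 * (a * b) ≤ c * a ^ 2 + (1/c) * b ^ 2 := by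
  have h1 : (0:ℝ) ≤ (c * a - b)^2 / c := by positivity
  have h2 : (c * a - b)^2 / c = c * a^2 - 2 * (a*b) + (1/c) * b^2 := by
    field_simp; ring
  linarith [h2 ▸ h1]
end young

set_option maxHeartbeats 1000000 in
/-- Key inequality (Lemma 4.1): with `p = prox_{αf}(v)`, `x⁺ = P_C(p)`, `x ∈ C`, `z ∈ X₀`,
subgradients of `f` bounded by `M` on `X₀ ⊇ C`, for all `τ, η, μ > 0`:
`‖x⁺ - x‖² ≤ ‖v - x‖² - 2α(f z - f x) + (1/τ + 1/η)M²α² + τ‖v - z‖²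
  + (η + μ - 2)‖v - p‖² - (1 - 1/μ)‖x⁺ - v‖²`. -/
theorem prox_projection_key_inequality
    {d : ℕ} (C X₀ : Set (EuclideanSpace ℝ (Fin d)))
    (hCne : C.Nonempty) (hCcl : IsClosed C) (hCcv : Convex ℝ C)
    (hCX : C ⊆ X₀)
    (f : EuclideanSpace ℝ (Fin d) → ℝ) (hf : ConvexOn ℝ Set.univ f)
    (M : ℝ)
    (hM : ∀ z ∈ X₀, ∀ g : EuclideanSpace ℝ (Fin d),
      (∀ y, f z + ⟪y - z, g⟫ ≤ f y) → ‖g‖ ≤ M)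
    (α : ℝ) (hα : 0 < α) (v x z p xplus : EuclideanSpace ℝ (Fin d))
    (hx : x ∈ C) (hz : z ∈ X₀)
    (hp : ∀ y, α * f p + (1 / 2) * ‖v - p‖ ^ 2 ≤ α * f y + (1 / 2) * ‖v - y‖ ^ 2)
    (hproj : xplus ∈ C ∧ ∀ y ∈ C, ‖p - xplus‖ ≤ ‖p - y‖) :
    ∀ τ η μ : ℝ, 0 < τ → 0 < η → 0 < μ →
      ‖xplus - x‖ ^ 2 ≤
        ‖v - x‖ ^ 2 - 2 * α * (f z - f x) + (1 / τ + 1 / η) * M ^ 2 * α ^ 2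
          + τ * ‖v - z‖ ^ 2 + (η + μ - 2) * ‖v - p‖ ^ 2
          - (1 - 1 / μ) * ‖xplus - v‖ ^ 2 := by
  intro τ η μ hτ hη hμ
  -- subgradient at z
  obtain ⟨w, hw⟩ := exists_subgradient f hf z
  have hwM : ‖w‖ ≤ M := hM z hz w hw
  have hM0 : 0 ≤ M := le_trans (norm_nonneg w) hwM
  -- projection variational inequality
  haveI : Nonempty C := ⟨⟨xplus, hproj.1⟩⟩
  have hiInf : ‖p - xplus‖ = ⨅ y : C, ‖p - y‖ := by
    have hb : BddBelow (Set.range fun y : C => ‖p - y‖) := by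
      refine ⟨0, ?_⟩
      rintro a ⟨y, rfl⟩
      exact norm_nonneg _
    exact le_antisymm (le_ciInf fun y => hproj.2 y y.2) (ciInf_le hb ⟨xplus, hproj.1⟩)
  have hVI : ⟪p - xplus, x - xplus⟫ ≤ 0 :=
    (norm_eq_iInf_iff_real_inner_le_zero hCcv hproj.1).mp hiInf x hx
  -- prox variational inequality at x : ⟪x - p, v - p⟫ ≤ α * (f x - f p)
  have hPVI : ⟪x - p, v - p⟫ ≤ α * (f x - f p) := by
    rw [real_inner_comm]
    refine le_of_forall_pos_le_add ?_
    intro ε hε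
    set N := ‖x - p‖ ^ 2 with hN
    have hN0 : 0 ≤ N := by positivity
    set t := min 1 (2 * ε / (N + 1)) with htdef
    have ht : 0 < t := lt_min one_pos (by positivity)
    have ht1 : t ≤ 1 := min_le_left _ _
    have htN : t * (N + 1) ≤ 2 * ε := by
      have h := min_le_right 1 (2 * ε / (N + 1))
      rw [← htdef] at h
      calc t * (N + 1) ≤ (2 * ε / (N + 1)) * (N + 1) :=
            mul_le_mul_of_nonneg_right h (by positivity)
        _ = 2 * ε := div_mul_cancel₀ _ (by positivity)
    have hy : v - (p + t • (x - p)) = (v - p) - t • (x - p) := by module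
    have hnorm : ‖(v - p) - t • (x - p)‖ ^ 2
        = ‖v - p‖ ^ 2 - 2 * (t * ⟪v - p, x - p⟫) + t ^ 2 * N := by
      rw [norm_sub_sq_real, real_inner_smul_right, norm_smul, mul_pow, Real.norm_eq_abs, sq_abs,
        hN]
    have hcv : f (p + t • (x - p)) ≤ (1 - t) * f p + t * f x := by
      have := hf.2 (mem_univ p) (mem_univ x)
        (show (0:ℝ) ≤ 1 - t by linarith) ht.le (show 1 - t + t = 1 by ring)
      simpa [smul_eq_mul, show (1 - t) • p + t • x = p + t • (x - p) by module] using this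
    have hhp := hp (p + t • (x - p))
    rw [hy, hnorm] at hhp
    have hfy := mul_le_mul_of_nonneg_left hcv hα.le
    have hkey : t * ⟪v - p, x - p⟫ ≤ t * (α * (f x - f p) + ε) := by
      nlinarith [hhp, hfy, ht, hN0, ht.le, htN]
    exact le_of_mul_le_mul_left hkey ht
  -- expansion identities
  have e1 : ‖p - x‖ ^ 2 = ‖p - xplus‖ ^ 2 + 2 * ⟪p - xplus, xplus - x⟫ + ‖xplus - x‖ ^ 2 := by
    rw [show p - x = (p - xplus) + (xplus - x) by module, norm_add_sq_real]
  have e1' : 0 ≤ ⟪p - xplus, xplus - x⟫ := by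
    have h := hVI
    rw [show x - xplus = -(xplus - x) by module, inner_neg_right] at h
    linarith
  have e2 : ‖p - x‖ ^ 2 = ‖v - x‖ ^ 2 - 2 * ⟪v - x, v - p⟫ + ‖v - p‖ ^ 2 := by
    rw [show p - x = (v - x) - (v - p) by module, norm_sub_sq_real]
  have e3 : ⟪v - x, v - p⟫ = ‖v - p‖ ^ 2 + ⟪p - x, v - p⟫ := by
    rw [show v - x = (v - p) + (p - x) by module, inner_add_left, real_inner_self_eq_norm_sq]
  have e4 : ⟪p - x, v - p⟫ = -⟪x - p, v - p⟫ := by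
    rw [show p - x = -(x - p) by module, inner_neg_left]
  -- subgradient pieces
  have hzp : f z - f p ≤ ⟪z - v, w⟫ + ⟪v - p, w⟫ := by
    have h := hw p
    have h5 : ⟪p - z, w⟫ = -(⟪z - v, w⟫ + ⟪v - p, w⟫) := by
      rw [show p - z = -((z - v) + (v - p)) by module, inner_neg_left, inner_add_left]
    rw [h5] at h
    linarith
  have e6 : ⟪z - v, w⟫ ≤ ‖v - z‖ * M := by
    calc ⟪z - v, w⟫ ≤ ‖z - v‖ * ‖w‖ := real_inner_le_norm _ _
      _ ≤ ‖v - z‖ * M := by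
          rw [norm_sub_rev]
          exact mul_le_mul_of_nonneg_left hwM (norm_nonneg _)
  have e7 : ⟪v - p, w⟫ ≤ ‖v - p‖ * M := by
    calc ⟪v - p, w⟫ ≤ ‖v - p‖ * ‖w‖ := real_inner_le_norm _ _
      _ ≤ ‖v - p‖ * M := mul_le_mul_of_nonneg_left hwM (norm_nonneg _)
  -- Young inequalities
  have y1 : 2 * α * (‖v - z‖ * M) ≤ τ * ‖v - z‖ ^ 2 + (1/τ) * M ^ 2 * α ^ 2 := by
    have := young_aux ‖v - z‖ (α * M) τ hτ
    nlinarith [this]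
  have y2 : 2 * α * (‖v - p‖ * M) ≤ η * ‖v - p‖ ^ 2 + (1/η) * M ^ 2 * α ^ 2 := by
    have := young_aux ‖v - p‖ (α * M) η hη
    nlinarith [this]
  -- μ inequality
  have e9 : (1 - 1/μ) * ‖xplus - v‖ ^ 2 ≤ ‖p - xplus‖ ^ 2 + (μ - 1) * ‖v - p‖ ^ 2 := by
    set a := xplus - p with ha
    set b := p - v with hb
    have hab : ‖xplus - v‖ ^ 2 = ‖a‖ ^ 2 + 2 * ⟪a, b⟫ + ‖b‖ ^ 2 := by
      rw [show xplus - v = a + b by rw [ha, hb]; module, norm_add_sq_real]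
    have hnn : 0 ≤ ‖a‖ ^ 2 - 2 * ((μ - 1) * ⟪a, b⟫) + (μ - 1) ^ 2 * ‖b‖ ^ 2 := by
      have := sq_nonneg ‖a - (μ - 1) • b‖
      rwa [norm_sub_sq_real, real_inner_smul_right, norm_smul, mul_pow, Real.norm_eq_abs,
        sq_abs] at this
    have hA : ‖p - xplus‖ ^ 2 = ‖a‖ ^ 2 := by rw [ha, norm_sub_rev]
    have hB : ‖v - p‖ ^ 2 = ‖b‖ ^ 2 := by rw [hb, norm_sub_rev]
    have key : (μ - 1) * ‖xplus - v‖ ^ 2 ≤ μ * (‖a‖ ^ 2 + (μ - 1) * ‖b‖ ^ 2) := by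
      rw [hab]; nlinarith [hnn]
    have hfin : ((μ - 1) * ‖xplus - v‖ ^ 2) / μ ≤ (μ * (‖a‖ ^ 2 + (μ - 1) * ‖b‖ ^ 2)) / μ :=
      div_le_div_of_nonneg_right key hμ.le
    rw [mul_div_cancel_left₀ _ hμ.ne'] at hfin
    have heq : (1 - 1/μ) * ‖xplus - v‖ ^ 2 = ((μ - 1) * ‖xplus - v‖ ^ 2) / μ := by
      field_simp
    rw [heq, hA, hB]
    exact hfin
  -- assemble
  have h2α : (0:ℝ) ≤ 2 * α := by positivity
  have hmul1 : 2 * α * (f z - f p) ≤ 2 * α * (⟪z - v, w⟫ + ⟪v - p, w⟫) :=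
    mul_le_mul_of_nonneg_left hzp h2α
  have hmul2 : 2 * α * ⟪z - v, w⟫ ≤ 2 * α * (‖v - z‖ * M) := mul_le_mul_of_nonneg_left e6 h2α
  have hmul3 : 2 * α * ⟪v - p, w⟫ ≤ 2 * α * (‖v - p‖ * M) := mul_le_mul_of_nonneg_left e7 h2α
  nlinarith [e1, e1', e2, e3, e4, hPVI, hmul1, hmul2, hmul3, y1, y2, e9]
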